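/- Let M be an abelian group with 2M = 0. Then (1+m+t)² = 1 + m ⊗ m in UM for all m ∈ M and t ∈ M ⊗ M. Moreover, letting V := (UM)^{ab} ⊗ ℤ/2ℤ (the quotient of UM by the subgroup generated by all commutators and all squares), the composite M ⊗ M → UM → V (sending t to the class of 1 + t) factors through the quotient ∧²M := (M ⊗ M)/⟨m ⊗ m : m ∈ M⟩, and the resulting sequence of F₂-vector spaces 0 → ∧²M → V → M → 0, whose second map is induced by π, is exact. -/

import Mathlib

open scoped TensorProduct

/-- The group `UM`: the kernel of `(T^{<3}M)^× → ℤ^× = {±1}`, where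
`T^{<3}M = ℤ ⊕ M ⊕ (M ⊗_ℤ M)` is the tensor algebra of `M` over `ℤ` truncated in
degrees `< 3`.  An element `1 + m + t` (with `m : M`, `t : M ⊗[ℤ] M`) is encoded
as the pair `⟨m, t⟩`, and the multiplication is
`(1+m+t)(1+m'+t') = 1 + (m+m') + (m ⊗ m' + t + t')`. -/
@[ext]
structure UGroup (M : Type) [AddCommGroup M] where
  m : M
  t : TensorProduct ℤ M M

namespace UGroup

variable {M : Type} [AddCommGroup M]

noncomputable instance : Mul (UGroup M) :=
  ⟨fun x y => ⟨x.m + y.m, x.m ⊗ₜ[ℤ] y.m + x.t + y.t⟩⟩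
noncomputable instance : One (UGroup M) := ⟨⟨0, 0⟩⟩
noncomputable instance : Inv (UGroup M) :=
  ⟨fun x => ⟨-x.m, x.m ⊗ₜ[ℤ] x.m - x.t⟩⟩

@[simp] lemma mul_m (x y : UGroup M) : (x * y).m = x.m + y.m := rfl
@[simp] lemma mul_t (x y : UGroup M) : (x * y).t = x.m ⊗ₜ[ℤ] y.m + x.t + y.t := rfl
@[simp] lemma one_m : (1 : UGroup M).m = 0 := rfl
@[simp] lemma one_t : (1 : UGroup M).t = 0 := rfl
@[simp] lemma inv_m (x : UGroup M) : (x⁻¹).m = -x.m := rfl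
@[simp] lemma inv_t (x : UGroup M) : (x⁻¹).t = x.m ⊗ₜ[ℤ] x.m - x.t := rfl

noncomputable instance : Group (UGroup M) where
  mul_assoc x y z := by
    ext
    · simp [add_assoc]
    · simp [TensorProduct.add_tmul, TensorProduct.tmul_add]
      abel
  one_mul x := by ext <;> simp
  mul_one x := by ext <;> simp
  inv_mul_cancel x := by
    ext
    · simp
    · simp [TensorProduct.neg_tmul]
      abel

/-- The set-theoretic section `s : M → UM`, `m ↦ 1 + m`. -/
noncomputable def s (m : M) : UGroup M := ⟨m, 0⟩

end UGroup

/-- The (normal) subgroup of `UM` generated by all commutators and all squares,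
so that the quotient is `V := (UM)^{ab} ⊗ ℤ/2ℤ`. -/
noncomputable def commSq (M : Type) [AddCommGroup M] : Subgroup (UGroup M) :=
  Subgroup.normalClosure
    {x : UGroup M | (∃ a b : UGroup M, x = a * b * a⁻¹ * b⁻¹) ∨ (∃ a : UGroup M, x = a * a)}

instance (M : Type) [AddCommGroup M] : (commSq M).Normal :=
  Subgroup.normalClosure_normal

/-- The subgroup `⟨m ⊗ m : m ∈ M⟩` of `M ⊗[ℤ] M`; the quotient by it is the
exterior square `∧²M`. -/
noncomputable def wedgeSub (M : Type) [AddCommGroup M] : AddSubgroup (TensorProduct ℤ M M) :=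
  AddSubgroup.closure {x | ∃ m : M, x = m ⊗ₜ[ℤ] m}


section Aux

variable {M : Type} [AddCommGroup M]

lemma tens_two (h2 : ∀ m : M, m + m = 0) (t : TensorProduct ℤ M M) : t + t = 0 := by
  have h : (2 : ℤ) • t = 0 := by
    induction t using TensorProduct.induction_on with
    | zero => simp
    | tmul a b =>
        rw [TensorProduct.smul_tmul']
        have ha : (2 : ℤ) • a = 0 := by rw [two_smul]; exact h2 a
        rw [ha, TensorProduct.zero_tmul]
    | add x y hx hy => rw [smul_add, hx, hy, add_zero]
  rw [← two_smul ℤ t]; exact h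

lemma gen_mem_wedge (m : M) : m ⊗ₜ[ℤ] m ∈ wedgeSub M :=
  AddSubgroup.subset_closure ⟨m, rfl⟩

lemma cross_mem_wedge (h2 : ∀ m : M, m + m = 0) (p q : M) :
    p ⊗ₜ[ℤ] q - q ⊗ₜ[ℤ] p ∈ wedgeSub M := by
  have key : p ⊗ₜ[ℤ] q - q ⊗ₜ[ℤ] p
      = (p + q) ⊗ₜ[ℤ] (p + q) - p ⊗ₜ[ℤ] p - q ⊗ₜ[ℤ] q - (q ⊗ₜ[ℤ] p + q ⊗ₜ[ℤ] p) := by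
    simp only [TensorProduct.add_tmul, TensorProduct.tmul_add]
    abel
  rw [key, tens_two h2 (q ⊗ₜ[ℤ] p), sub_zero]
  exact sub_mem (sub_mem (gen_mem_wedge (p + q)) (gen_mem_wedge p)) (gen_mem_wedge q)

/-- The subgroup of `UGroup M` of elements `1 + 0 + t` with `t ∈ wedgeSub M`. -/
noncomputable def Ksub (M : Type) [AddCommGroup M] : Subgroup (UGroup M) where
  carrier := {x | x.m = 0 ∧ x.t ∈ wedgeSub M}
  mul_mem' := by
    rintro x y ⟨hm, ht⟩ ⟨hm', ht'⟩
    refine ⟨by simp [hm, hm'], ?_⟩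
    simp only [UGroup.mul_t, hm, TensorProduct.zero_tmul, zero_add]
    exact add_mem ht ht'
  one_mem' := ⟨rfl, zero_mem _⟩
  inv_mem' := by
    rintro x ⟨hm, ht⟩
    refine ⟨by simp [hm], ?_⟩
    simp only [UGroup.inv_t, hm, TensorProduct.zero_tmul, zero_sub]
    exact neg_mem ht

instance KsubNormal (M : Type) [AddCommGroup M] : (Ksub M).Normal := by
  constructor
  rintro n ⟨hm, ht⟩ g
  constructor
  · simp [hm]
  · show (g * n * g⁻¹).t ∈ wedgeSub M
    have e : (g * n * g⁻¹).t = n.t := by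
      simp only [UGroup.mul_t, UGroup.mul_m, UGroup.inv_t, UGroup.inv_m, hm,
        TensorProduct.tmul_zero, add_zero, TensorProduct.tmul_neg]
      abel
    rw [e]; exact ht

lemma commSq_eq (h2 : ∀ m : M, m + m = 0) : commSq M = Ksub M := by
  apply le_antisymm
  · apply Subgroup.normalClosure_le_normal
    rintro x (⟨a, b, rfl⟩ | ⟨a, rfl⟩)
    · refine ⟨by simp only [UGroup.mul_m, UGroup.inv_m]; abel, ?_⟩
      have ht : (a * b * a⁻¹ * b⁻¹).t = a.m ⊗ₜ[ℤ] b.m - b.m ⊗ₜ[ℤ] a.m := by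
        simp only [UGroup.mul_t, UGroup.mul_m, UGroup.inv_t, UGroup.inv_m,
          TensorProduct.add_tmul, TensorProduct.tmul_neg, TensorProduct.neg_tmul]
        abel
      show (a * b * a⁻¹ * b⁻¹).t ∈ wedgeSub M
      rw [ht]; exact cross_mem_wedge h2 a.m b.m
    · refine ⟨by simp [h2 a.m], ?_⟩
      show (a * a).t ∈ wedgeSub M
      have : (a * a).t = a.m ⊗ₜ[ℤ] a.m := by
        simp only [UGroup.mul_t]
        rw [add_assoc, tens_two h2 a.t, add_zero]
      rw [this]; exact gen_mem_wedge a.m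
  · have main : ∀ t ∈ wedgeSub M, (⟨0, t⟩ : UGroup M) ∈ commSq M := by
      intro t htt
      induction htt using AddSubgroup.closure_induction with
      | mem y hy =>
          obtain ⟨m, rfl⟩ := hy
          have e : (⟨0, m ⊗ₜ[ℤ] m⟩ : UGroup M) = UGroup.s m * UGroup.s m := by
            ext
            · simp [UGroup.s, h2 m]
            · simp [UGroup.s]
          rw [e]
          exact Subgroup.subset_normalClosure (Or.inr ⟨UGroup.s m, rfl⟩)
      | zero => exact one_mem _
      | add y z _ _ hy hz =>
          have e : (⟨0, y + z⟩ : UGroup M) = (⟨0, y⟩ : UGroup M) * ⟨0, z⟩ := by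
            ext <;> simp
          rw [e]; exact mul_mem hy hz
      | neg y _ hy =>
          have e : (⟨0, -y⟩ : UGroup M) = (⟨0, y⟩ : UGroup M)⁻¹ := by
            ext <;> simp
          rw [e]; exact inv_mem hy
    rintro x ⟨hm, ht⟩
    have hx : x = (⟨0, x.t⟩ : UGroup M) := by ext <;> simp [hm]
    rw [hx]
    exact main x.t ht

lemma mem_commSq_iff (h2 : ∀ m : M, m + m = 0) (x : UGroup M) :
    x ∈ commSq M ↔ x.m = 0 ∧ x.t ∈ wedgeSub M := by
  rw [commSq_eq h2]; rfl

end Aux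

/-- (Remark 2.4(b).)  Suppose `2M = 0`.  Then `(1+m+t)² = 1 + m ⊗ m` in `UM`.
Moreover, with `V := (UM)^{ab} ⊗ ℤ/2ℤ` (the quotient of `UM` by the subgroup
generated by all commutators and all squares), the composite
`M ⊗ M → UM → V`, `t ↦ [1 + t]`, factors through `∧²M = (M ⊗ M)/⟨m ⊗ m⟩`, and
the resulting sequence of `F₂`-vector spaces `0 → ∧²M → V → M → 0` (second map
induced by `π`) is exact. -/
theorem self_cup_stmt_5 (M : Type) [AddCommGroup M] (h2 : ∀ m : M, m + m = 0) :
    -- `(1+m+t)² = 1 + m ⊗ m`: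
    (∀ x : UGroup M, x * x = ⟨0, x.m ⊗ₜ[ℤ] x.m⟩) ∧
    -- the map `V → M` induced by `π`:
    ∃ πV : (UGroup M ⧸ commSq M) →* Multiplicative M,
      (∀ x : UGroup M, πV (QuotientGroup.mk x) = Multiplicative.ofAdd x.m) ∧
      -- exactness at `M`:
      Function.Surjective πV ∧
      -- the map `t ↦ [1 + t]` factors through `∧²M`:
      ∃ jbar : ((TensorProduct ℤ M M) ⧸ wedgeSub M) → (UGroup M ⧸ commSq M),
        (∀ t : TensorProduct ℤ M M,
          jbar (QuotientAddGroup.mk t) = QuotientGroup.mk (⟨0, t⟩ : UGroup M)) ∧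
        (∀ a b, jbar (a + b) = jbar a * jbar b) ∧
        -- exactness at `∧²M`:
        Function.Injective jbar ∧
        -- exactness at `V`:
        (∀ v : UGroup M ⧸ commSq M, πV v = 1 ↔ ∃ a, jbar a = v) ∧
        -- all the groups in the sequence are `F₂`-vector spaces:
        (∀ v : UGroup M ⧸ commSq M, v * v = 1) ∧
        (∀ v w : UGroup M ⧸ commSq M, v * w = w * v) ∧
        (∀ a : (TensorProduct ℤ M M) ⧸ wedgeSub M, a + a = 0) := by
  have sq : ∀ x : UGroup M, x * x = (⟨0, x.m ⊗ₜ[ℤ] x.m⟩ : UGroup M) := by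
    intro x
    ext
    · simp [h2 x.m]
    · simp only [UGroup.mul_t]
      rw [add_assoc, tens_two h2 x.t, add_zero]
  refine ⟨sq, ?_⟩
  -- construct πV
  set φ : UGroup M →* Multiplicative M :=
    { toFun := fun x => Multiplicative.ofAdd x.m
      map_one' := rfl
      map_mul' := fun x y => rfl } with hφ
  have hker : commSq M ≤ φ.ker := by
    intro x hx
    rw [mem_commSq_iff h2] at hx
    show Multiplicative.ofAdd x.m = 1
    rw [hx.1]; rfl
  refine ⟨QuotientGroup.lift (commSq M) φ hker, fun x => rfl, ?_, ?_⟩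
  · intro m
    exact ⟨QuotientGroup.mk (UGroup.s m), rfl⟩
  -- construct jbar
  have mulj : ∀ t t' : TensorProduct ℤ M M,
      (⟨0, t + t'⟩ : UGroup M) = (⟨0, t⟩ : UGroup M) * ⟨0, t'⟩ := by
    intro t t'; ext <;> simp
  set ψ : TensorProduct ℤ M M →+ Additive (UGroup M ⧸ commSq M) :=
    { toFun := fun t => Additive.ofMul (QuotientGroup.mk (⟨0, t⟩ : UGroup M))
      map_zero' := by
        show Additive.ofMul (QuotientGroup.mk (1 : UGroup M)) = 0
        simp
      map_add' := fun t t' => by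
        show Additive.ofMul (QuotientGroup.mk (⟨0, t + t'⟩ : UGroup M)) = _
        rw [mulj t t', QuotientGroup.mk_mul]; rfl } with hψ
  have hker' : ∀ t ∈ wedgeSub M, ψ t = 0 := by
    intro t ht
    show Additive.ofMul (QuotientGroup.mk (⟨0, t⟩ : UGroup M)) = 0
    have e : (QuotientGroup.mk (⟨0, t⟩ : UGroup M) : UGroup M ⧸ commSq M) = 1 := by
      rw [QuotientGroup.eq_one_iff, mem_commSq_iff h2]
      exact ⟨rfl, ht⟩
    rw [e]; rfl
  set jbar' := QuotientAddGroup.lift (wedgeSub M) ψ hker' with hjbar'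
  refine ⟨fun a => Additive.toMul (jbar' a), fun t => rfl, ?_, ?_, ?_, ?_, ?_, ?_⟩
  · intro a b
    show Additive.toMul (jbar' (a + b)) = Additive.toMul (jbar' a) * Additive.toMul (jbar' b)
    rw [map_add]; rfl
  · -- injectivity
    intro a b hab
    induction a using QuotientAddGroup.induction_on with | H t =>
    induction b using QuotientAddGroup.induction_on with | H t' =>
    have h : (QuotientGroup.mk (⟨0, t⟩ : UGroup M) : UGroup M ⧸ commSq M)
        = QuotientGroup.mk (⟨0, t'⟩ : UGroup M) := hab
    rw [QuotientGroup.eq, mem_commSq_iff h2] at h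
    have ht : -t + t' ∈ wedgeSub M := by
      have h2' := h.2
      have e : ((⟨0, t⟩ : UGroup M)⁻¹ * ⟨0, t'⟩).t = -t + t' := by
        simp only [UGroup.inv_t, UGroup.inv_m, UGroup.mul_t]
        simp only [neg_zero, TensorProduct.zero_tmul, TensorProduct.tmul_zero]
        abel
      rwa [e] at h2'
    rw [QuotientAddGroup.eq]
    exact ht
  · -- exactness at V
    intro v
    induction v using QuotientGroup.induction_on with | H x =>
    constructor
    · intro hv
      have hm : x.m = 0 := hv
      refine ⟨QuotientAddGroup.mk x.t, ?_⟩
      show (QuotientGroup.mk (⟨0, x.t⟩ : UGroup M) : UGroup M ⧸ commSq M) = _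
      congr 1
      ext <;> simp [hm]
    · rintro ⟨a, ha⟩
      rw [← ha]
      induction a using QuotientAddGroup.induction_on with | H t =>
      rfl
  · -- squares vanish in V
    intro v
    induction v using QuotientGroup.induction_on with | H x =>
    show (QuotientGroup.mk (x * x) : UGroup M ⧸ commSq M) = 1
    rw [QuotientGroup.eq_one_iff]
    exact Subgroup.subset_normalClosure (Or.inr ⟨x, rfl⟩)
  · -- commutativity of V
    intro v w
    induction v using QuotientGroup.induction_on with | H x =>
    induction w using QuotientGroup.induction_on with | H y =>
    show (QuotientGroup.mk (x * y) : UGroup M ⧸ commSq M) = QuotientGroup.mk (y * x)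
    rw [QuotientGroup.eq]
    have e : (x * y)⁻¹ * (y * x) = y⁻¹ * x⁻¹ * (y⁻¹)⁻¹ * (x⁻¹)⁻¹ := by
      group
    rw [e]
    exact Subgroup.subset_normalClosure (Or.inl ⟨y⁻¹, x⁻¹, rfl⟩)
  · -- 2-torsion in ∧²M
    intro a
    induction a using QuotientAddGroup.induction_on with | H t =>
    show QuotientAddGroup.mk (t + t) = (0 : TensorProduct ℤ M M ⧸ wedgeSub M)
    rw [tens_two h2 t]
    rfl
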